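/- Let Γ be a countable group and Γ ≥ Δ₁ ≥ Δ₂ ≥ ⋯ a decreasing sequence of finite-index normal subgroups. Let G = lim← Γ/Δₙ be the inverse limit (the compact group of compatible sequences in ∏ₙ Γ/Δₙ), equipped with its Haar probability measure μ, and let Γ×Γ act on G by (g,h)·x = ḡ·x·h̄⁻¹, where ḡ denotes the image of g ∈ Γ in G. Then this left-and-right translation action is essentially free (i.e., for every (g,h) ≠ (e,e) the set {x ∈ G : ḡxh̄⁻¹ = x} is μ-null) if and only if for every g ∈ Γ with g ≠ e, limₙ |Zₙ(g)| / [Γ : Δₙ] = 0, where Zₙ(g) denotes the centralizer in the finite group Γ/Δₙ of the image of g. -/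

import Mathlib

/-- Every quotient of a (discrete) group is given the discrete σ-algebra; for the finite
quotients appearing below this is the Borel σ-algebra of the discrete topology. -/
instance quotientGroupMeasurableSpace {Γ : Type*} [Group Γ] (H : Subgroup Γ) :
    MeasurableSpace (Γ ⧸ H) := ⊤

/-- The inverse limit `lim← Γ/Δₙ` of the quotients along a decreasing sequence of normal
subgroups, realized as the subgroup of compatible sequences in `∏ₙ Γ/Δₙ`.  (As a subtype of
the product it carries the product σ-algebra, which is the Borel σ-algebra of the natural
profinite topology.) -/
def profiniteLimit {Γ : Type*} [Group Γ] (Δ : ℕ → Subgroup Γ) [∀ n, (Δ n).Normal]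
    (hdec : ∀ n, Δ (n + 1) ≤ Δ n) : Subgroup (∀ n, Γ ⧸ Δ n) where
  carrier := {x | ∀ n, QuotientGroup.map (Δ (n + 1)) (Δ n) (MonoidHom.id Γ)
      (by simpa using hdec n) (x (n + 1)) = x n}
  one_mem' := by intro n; simp
  mul_mem' := by
    intro a b ha hb n
    simp only [Pi.mul_apply, map_mul, Set.mem_setOf_eq] at *
    rw [ha n, hb n]
  inv_mem' := by
    intro a ha n
    simp only [Pi.inv_apply, map_inv, Set.mem_setOf_eq] at *
    rw [ha n]

/-- The canonical image of `g : Γ` in the inverse limit `lim← Γ/Δₙ`. -/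
def profiniteLimit.mk {Γ : Type*} [Group Γ] (Δ : ℕ → Subgroup Γ) [∀ n, (Δ n).Normal]
    (hdec : ∀ n, Δ (n + 1) ≤ Δ n) (g : Γ) : profiniteLimit Δ hdec :=
  ⟨fun n => QuotientGroup.mk g, fun n => by simp [QuotientGroup.map_mk]⟩

set_option linter.unusedSectionVars false

open MeasureTheory Filter ENNReal Topology

namespace ProfAux

variable {Γ : Type*} [Group Γ] (Δ : ℕ → Subgroup Γ) [∀ n, (Δ n).Normal]
  (hdec : ∀ n, Δ (n + 1) ≤ Δ n)

lemma meas_eval (n : ℕ) :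
    Measurable (fun x : profiniteLimit Δ hdec => (x : ∀ n, Γ ⧸ Δ n) n) :=
  (measurable_pi_apply n).comp measurable_subtype_coe

variable [∀ n, (Δ n).FiniteIndex]
  (μ : Measure (profiniteLimit Δ hdec)) [IsProbabilityMeasure μ] [μ.IsMulLeftInvariant]

lemma meas_mul_left (g : Γ) :
    Measurable (fun x : profiniteLimit Δ hdec => profiniteLimit.mk Δ hdec g * x) := by
  apply Measurable.subtype_mk
  apply measurable_pi_lambda
  intro n
  exact measurable_from_top.comp (meas_eval Δ hdec n)

lemma fiber_shift (n : ℕ) (g : Γ) (a : Γ ⧸ Δ n) :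
    μ {x : profiniteLimit Δ hdec | (x : ∀ n, Γ ⧸ Δ n) n = QuotientGroup.mk g * a}
      = μ {x : profiniteLimit Δ hdec | (x : ∀ n, Γ ⧸ Δ n) n = a} := by
  have hmap := map_mul_left_eq_self μ (profiniteLimit.mk Δ hdec g)
  have hms : MeasurableSet {x : profiniteLimit Δ hdec |
      (x : ∀ n, Γ ⧸ Δ n) n = QuotientGroup.mk g * a} :=
    meas_eval Δ hdec n (MeasurableSet.singleton (QuotientGroup.mk g * a))
  calc μ {x : profiniteLimit Δ hdec | (x : ∀ n, Γ ⧸ Δ n) n = QuotientGroup.mk g * a}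
      = (μ.map (fun x => profiniteLimit.mk Δ hdec g * x))
          {x : profiniteLimit Δ hdec | (x : ∀ n, Γ ⧸ Δ n) n = QuotientGroup.mk g * a} := by
        rw [hmap]
    _ = μ ((fun x => profiniteLimit.mk Δ hdec g * x) ⁻¹'
          {x : profiniteLimit Δ hdec | (x : ∀ n, Γ ⧸ Δ n) n = QuotientGroup.mk g * a}) :=
        Measure.map_apply (meas_mul_left Δ hdec g) hms
    _ = μ {x : profiniteLimit Δ hdec | (x : ∀ n, Γ ⧸ Δ n) n = a} := by
        congr 1
        ext x
        simp only [Set.mem_preimage, Set.mem_setOf_eq, Subgroup.coe_mul, Pi.mul_apply,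
          profiniteLimit.mk, mul_right_inj]

lemma fiber_measure (n : ℕ) (a : Γ ⧸ Δ n) :
    μ {x : profiniteLimit Δ hdec | (x : ∀ n, Γ ⧸ Δ n) n = a}
      = ((Δ n).index : ℝ≥0∞)⁻¹ := by
  haveI : Finite (Γ ⧸ Δ n) := Subgroup.finite_quotient_of_finiteIndex (H := Δ n)
  cases nonempty_fintype (Γ ⧸ Δ n)
  have hconst : ∀ b : Γ ⧸ Δ n,
      μ {x : profiniteLimit Δ hdec | (x : ∀ n, Γ ⧸ Δ n) n = b}
        = μ {x : profiniteLimit Δ hdec | (x : ∀ n, Γ ⧸ Δ n) n = (1 : Γ ⧸ Δ n)} := by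
    intro b
    obtain ⟨g, rfl⟩ := QuotientGroup.mk_surjective b
    simpa using fiber_shift Δ hdec μ n g 1
  have hsum := sum_measure_preimage_singleton (μ := μ) (Finset.univ : Finset (Γ ⧸ Δ n))
    (f := fun x : profiniteLimit Δ hdec => (x : ∀ n, Γ ⧸ Δ n) n)
    (fun b _ => meas_eval Δ hdec n (MeasurableSet.singleton b))
  simp only [Finset.coe_univ, Set.preimage_univ, measure_univ] at hsum
  have : ∀ b : Γ ⧸ Δ n,
      μ ((fun x : profiniteLimit Δ hdec => (x : ∀ n, Γ ⧸ Δ n) n) ⁻¹' {b})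
        = μ {x : profiniteLimit Δ hdec | (x : ∀ n, Γ ⧸ Δ n) n = (1 : Γ ⧸ Δ n)} := by
    intro b
    rw [show ((fun x : profiniteLimit Δ hdec => (x : ∀ n, Γ ⧸ Δ n) n) ⁻¹' {b})
      = {x : profiniteLimit Δ hdec | (x : ∀ n, Γ ⧸ Δ n) n = b} from rfl]
    exact hconst b
  rw [Finset.sum_congr rfl (fun b _ => this b), Finset.sum_const, Finset.card_univ,
    nsmul_eq_mul] at hsum
  have hcard : (Fintype.card (Γ ⧸ Δ n) : ℝ≥0∞) = ((Δ n).index : ℝ≥0∞) := by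
    rw [← Nat.card_eq_fintype_card]; rfl
  rw [hcard] at hsum
  have hne : ((Δ n).index : ℝ≥0∞) ≠ 0 := by
    exact_mod_cast Nat.cast_ne_zero.2 (Subgroup.FiniteIndex.index_ne_zero (H := Δ n))
  have htop : ((Δ n).index : ℝ≥0∞) ≠ ∞ := natCast_ne_top _
  rw [hconst a]
  calc μ {x : profiniteLimit Δ hdec | (x : ∀ n, Γ ⧸ Δ n) n = (1 : Γ ⧸ Δ n)}
      = (((Δ n).index : ℝ≥0∞)⁻¹ * ((Δ n).index : ℝ≥0∞)) *
        μ {x : profiniteLimit Δ hdec | (x : ∀ n, Γ ⧸ Δ n) n = (1 : Γ ⧸ Δ n)} := by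
        rw [ENNReal.inv_mul_cancel hne htop, one_mul]
    _ = ((Δ n).index : ℝ≥0∞)⁻¹ := by rw [mul_assoc, hsum, mul_one]

lemma set_measure (n : ℕ) (S : Set (Γ ⧸ Δ n)) :
    μ {x : profiniteLimit Δ hdec | (x : ∀ n, Γ ⧸ Δ n) n ∈ S}
      = (Nat.card S : ℝ≥0∞) * ((Δ n).index : ℝ≥0∞)⁻¹ := by
  haveI : Finite (Γ ⧸ Δ n) := Subgroup.finite_quotient_of_finiteIndex (H := Δ n)
  cases nonempty_fintype (Γ ⧸ Δ n)
  classical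
  have hsum := sum_measure_preimage_singleton (μ := μ) S.toFinset
    (f := fun x : profiniteLimit Δ hdec => (x : ∀ n, Γ ⧸ Δ n) n)
    (fun b _ => meas_eval Δ hdec n (MeasurableSet.singleton b))
  rw [Set.coe_toFinset] at hsum
  have : {x : profiniteLimit Δ hdec | (x : ∀ n, Γ ⧸ Δ n) n ∈ S}
      = (fun x : profiniteLimit Δ hdec => (x : ∀ n, Γ ⧸ Δ n) n) ⁻¹' S := rfl
  have hfib : ∀ b : Γ ⧸ Δ n,
      μ ((fun x : profiniteLimit Δ hdec => (x : ∀ n, Γ ⧸ Δ n) n) ⁻¹' {b})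
        = ((Δ n).index : ℝ≥0∞)⁻¹ := fun b => fiber_measure Δ hdec μ n b
  rw [this, ← hsum, Finset.sum_congr rfl (fun b _ => hfib b), Finset.sum_const,
    nsmul_eq_mul, Set.toFinset_card, ← Nat.card_eq_fintype_card]

end ProfAux

namespace ProfAux

variable {Γ : Type*} [Group Γ] (Δ : ℕ → Subgroup Γ) [∀ n, (Δ n).Normal]

/-- level-`n` fixed set of `(g,h)` -/
def Fset (g h : Γ) (n : ℕ) : Set (Γ ⧸ Δ n) :=
  {y | QuotientGroup.mk g * y * (QuotientGroup.mk h)⁻¹ = y}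

variable (hdec : ∀ n, Δ (n + 1) ≤ Δ n)

/-- level-`n` cylinder over the fixed set -/
def Aset (g h : Γ) (n : ℕ) : Set (profiniteLimit Δ hdec) :=
  {x | (x : ∀ n, Γ ⧸ Δ n) n ∈ Fset Δ g h n}

lemma Aset_antitone (g h : Γ) : Antitone (Aset Δ hdec g h) := by
  apply antitone_nat_of_succ_le
  intro n x hx
  simp only [Aset, Fset, Set.mem_setOf_eq] at hx ⊢
  have hc := x.2 n
  set φ := QuotientGroup.map (Δ (n + 1)) (Δ n) (MonoidHom.id Γ) (by simpa using hdec n) with hφ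
  have hg : (QuotientGroup.mk g : Γ ⧸ Δ n) = φ (QuotientGroup.mk g) := by
    simp [hφ, QuotientGroup.map_mk]
  have hh : (QuotientGroup.mk h : Γ ⧸ Δ n) = φ (QuotientGroup.mk h) := by
    simp [hφ, QuotientGroup.map_mk]
  rw [← hc, hg, hh, ← map_inv, ← map_mul, ← map_mul, hx]

lemma fix_eq_iInter (g h : Γ) :
    {x : profiniteLimit Δ hdec |
        profiniteLimit.mk Δ hdec g * x * (profiniteLimit.mk Δ hdec h)⁻¹ = x}
      = ⋂ n, Aset Δ hdec g h n := by
  ext x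
  simp only [Set.mem_setOf_eq, Set.mem_iInter, Aset, Fset, Subtype.ext_iff, funext_iff,
    Subgroup.coe_mul, InvMemClass.coe_inv, Pi.mul_apply, Pi.inv_apply, profiniteLimit.mk]

lemma measurable_Aset (g h : Γ) (n : ℕ) : MeasurableSet (Aset Δ hdec g h n) :=
  meas_eval Δ hdec n (MeasurableSpace.measurableSet_top)

variable [∀ n, (Δ n).FiniteIndex]
  (μ : MeasureTheory.Measure (profiniteLimit Δ hdec))
  [MeasureTheory.IsProbabilityMeasure μ] [μ.IsMulLeftInvariant]

lemma measure_Aset (g h : Γ) (n : ℕ) :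
    μ (Aset Δ hdec g h n)
      = (Nat.card (Fset Δ g h n) : ℝ≥0∞) * ((Δ n).index : ℝ≥0∞)⁻¹ :=
  set_measure Δ hdec μ n (Fset Δ g h n)

lemma tendsto_measure_fix (g h : Γ) :
    Tendsto (fun n => (Nat.card (Fset Δ g h n) : ℝ≥0∞) * ((Δ n).index : ℝ≥0∞)⁻¹) atTop
      (𝓝 (μ {x : profiniteLimit Δ hdec |
          profiniteLimit.mk Δ hdec g * x * (profiniteLimit.mk Δ hdec h)⁻¹ = x})) := by
  have h1 := tendsto_measure_iInter_atTop (μ := μ)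
    (fun n => (measurable_Aset Δ hdec g h n).nullMeasurableSet)
    (Aset_antitone Δ hdec g h) ⟨0, MeasureTheory.measure_ne_top μ _⟩
  rw [← fix_eq_iInter] at h1
  exact h1.congr (fun n => measure_Aset Δ hdec μ g h n)

lemma fix_subset (g h : Γ) (n : ℕ) :
    {x : profiniteLimit Δ hdec |
        profiniteLimit.mk Δ hdec g * x * (profiniteLimit.mk Δ hdec h)⁻¹ = x}
      ⊆ Aset Δ hdec g h n := by
  rw [fix_eq_iInter]; exact Set.iInter_subset _ n

lemma card_Fset_le (g h : Γ) (n : ℕ) :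
    Nat.card (Fset Δ g h n)
      ≤ Nat.card (Subgroup.centralizer ({QuotientGroup.mk h} : Set (Γ ⧸ Δ n))) := by
  haveI : Finite (Γ ⧸ Δ n) := Subgroup.finite_quotient_of_finiteIndex (H := Δ n)
  rcases isEmpty_or_nonempty (Fset Δ g h n) with he | hne
  · simp [Nat.card_of_isEmpty]
  · obtain ⟨⟨y₀, hy₀⟩⟩ := hne
    simp only [Fset, Set.mem_setOf_eq, mul_inv_eq_iff_eq_mul] at hy₀
    -- hy₀ : mk g * y₀ = y₀ * mk h
    have h1 : (QuotientGroup.mk h : Γ ⧸ Δ n) * y₀⁻¹ = y₀⁻¹ * QuotientGroup.mk g :=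
      mul_left_cancel (a := y₀) (by
        rw [← mul_assoc, ← hy₀, mul_assoc, mul_inv_cancel, mul_one, mul_inv_cancel_left])
    have hmem : ∀ y ∈ Fset Δ g h n,
        y₀⁻¹ * y ∈ Subgroup.centralizer ({QuotientGroup.mk h} : Set (Γ ⧸ Δ n)) := by
      intro y hy
      simp only [Fset, Set.mem_setOf_eq, mul_inv_eq_iff_eq_mul] at hy
      rw [Subgroup.mem_centralizer_iff]
      intro s hs
      rw [Set.mem_singleton_iff] at hs
      subst hs
      calc QuotientGroup.mk h * (y₀⁻¹ * y)
          = (QuotientGroup.mk h * y₀⁻¹) * y := (mul_assoc _ _ _).symm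
        _ = (y₀⁻¹ * QuotientGroup.mk g) * y := by rw [h1]
        _ = y₀⁻¹ * (QuotientGroup.mk g * y) := mul_assoc _ _ _
        _ = y₀⁻¹ * (y * QuotientGroup.mk h) := by rw [hy]
        _ = (y₀⁻¹ * y) * QuotientGroup.mk h := (mul_assoc _ _ _).symm
    exact Nat.card_le_card_of_injective
      (fun y => (⟨y₀⁻¹ * y.1, hmem y.1 y.2⟩ :
        Subgroup.centralizer ({QuotientGroup.mk h} : Set (Γ ⧸ Δ n))))
      (fun a b hab => by
        simpa [Subtype.ext_iff] using mul_left_cancel (Subtype.ext_iff.1 hab))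

end ProfAux

open ProfAux in
/-- Let `Γ` be a countable group, `Δₙ` a decreasing sequence of finite-index
normal subgroups, `G = lim← Γ/Δₙ` with its Haar probability measure `μ` (characterized as the
unique left-invariant Borel probability measure on the compact group `G`), and let `Γ × Γ`
act on `G` by `(g, h)·x = ḡ·x·h̄⁻¹`.  This action is essentially free iff for every `g ≠ e`
the density of the centralizer of `g` in `Γ/Δₙ` tends to `0`. -/
theorem left_right_translation_essentially_free_iff {Γ : Type*} [Group Γ] [Countable Γ]
    (Δ : ℕ → Subgroup Γ) [∀ n, (Δ n).Normal] [∀ n, (Δ n).FiniteIndex]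
    (hdec : ∀ n, Δ (n + 1) ≤ Δ n)
    (μ : MeasureTheory.Measure (profiniteLimit Δ hdec))
    [MeasureTheory.IsProbabilityMeasure μ] [μ.IsMulLeftInvariant] :
    (∀ g h : Γ, (g, h) ≠ (1, 1) →
        μ {x : profiniteLimit Δ hdec |
            profiniteLimit.mk Δ hdec g * x * (profiniteLimit.mk Δ hdec h)⁻¹ = x} = 0) ↔
      (∀ g : Γ, g ≠ 1 →
        Filter.Tendsto
          (fun n =>
            (Nat.card (Subgroup.centralizer
                ({QuotientGroup.mk g} : Set (Γ ⧸ Δ n))) : ℝ) / ((Δ n).index : ℝ))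
          Filter.atTop (nhds 0)) := by
  have hidx : ∀ n, ((Δ n).index : ℝ) ≠ 0 :=
    fun n => Nat.cast_ne_zero.2 Subgroup.FiniteIndex.index_ne_zero
  constructor
  · intro hfree g hg
    have hT := tendsto_measure_fix Δ hdec μ g g
    rw [hfree g g (by simp [hg])] at hT
    have hcard : ∀ n, Nat.card (Fset Δ g g n)
        = Nat.card (Subgroup.centralizer ({QuotientGroup.mk g} : Set (Γ ⧸ Δ n))) := by
      intro n
      have hset : Fset Δ g g n
          = (Subgroup.centralizer ({QuotientGroup.mk g} : Set (Γ ⧸ Δ n)) : Set (Γ ⧸ Δ n)) := by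
        ext y
        simp only [Fset, Set.mem_setOf_eq, mul_inv_eq_iff_eq_mul, SetLike.mem_coe,
          Subgroup.mem_centralizer_iff, Set.mem_singleton_iff, forall_eq]
      rw [hset, SetLike.coe_sort_coe]
    have hreal := (ENNReal.tendsto_toReal (by simp : (0 : ℝ≥0∞) ≠ ⊤)).comp hT
    simp only [ENNReal.toReal_zero] at hreal
    refine hreal.congr fun n => ?_
    simp only [Function.comp_apply, ENNReal.toReal_mul, ENNReal.toReal_inv,
      ENNReal.toReal_natCast, hcard n, div_eq_mul_inv]
  · intro hden g h hgh
    by_cases hh : h = 1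
    · subst hh
      have hg : g ≠ 1 := by simpa [Prod.ext_iff] using hgh
      obtain ⟨n₀, hn₀⟩ := ((hden g hg).eventually_lt_const (by norm_num : (0:ℝ) < 1)).exists
      have hgn : (QuotientGroup.mk g : Γ ⧸ Δ n₀) ≠ 1 := by
        intro h1
        rw [h1] at hn₀
        have hcent : Subgroup.centralizer ({(1 : Γ ⧸ Δ n₀)} : Set (Γ ⧸ Δ n₀)) = ⊤ := by
          ext y; simp [Subgroup.mem_centralizer_iff]
        rw [hcent] at hn₀
        have htop : (Nat.card (⊤ : Subgroup (Γ ⧸ Δ n₀)) : ℝ) = ((Δ n₀).index : ℝ) := by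
          rw [Nat.card_congr Subgroup.topEquiv.toEquiv]; rfl
        rw [htop, div_self (hidx n₀)] at hn₀
        exact lt_irrefl 1 hn₀
      have hempty : {x : profiniteLimit Δ hdec |
          profiniteLimit.mk Δ hdec g * x * (profiniteLimit.mk Δ hdec 1)⁻¹ = x} = ∅ := by
        rw [Set.eq_empty_iff_forall_notMem]
        intro x hx
        have hmem := fix_subset Δ hdec g 1 n₀ hx
        simp only [Aset, Fset, Set.mem_setOf_eq, QuotientGroup.mk_one, inv_one, mul_one] at hmem
        exact hgn (mul_eq_right.1 hmem)
      rw [hempty]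
      exact MeasureTheory.measure_empty
    · have hb : ∀ n,
          (μ {x : profiniteLimit Δ hdec |
              profiniteLimit.mk Δ hdec g * x * (profiniteLimit.mk Δ hdec h)⁻¹ = x}).toReal
            ≤ (Nat.card (Subgroup.centralizer
                ({QuotientGroup.mk h} : Set (Γ ⧸ Δ n))) : ℝ) / ((Δ n).index : ℝ) := by
        intro n
        have h1 : μ {x : profiniteLimit Δ hdec |
              profiniteLimit.mk Δ hdec g * x * (profiniteLimit.mk Δ hdec h)⁻¹ = x}
            ≤ (Nat.card (Subgroup.centralizer
                ({QuotientGroup.mk h} : Set (Γ ⧸ Δ n))) : ℝ≥0∞) * ((Δ n).index : ℝ≥0∞)⁻¹ := by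
          refine le_trans (MeasureTheory.measure_mono (fix_subset Δ hdec g h n)) ?_
          rw [measure_Aset Δ hdec μ g h n]
          gcongr
          exact_mod_cast card_Fset_le Δ g h n
        have hfin : (Nat.card (Subgroup.centralizer
              ({QuotientGroup.mk h} : Set (Γ ⧸ Δ n))) : ℝ≥0∞) * ((Δ n).index : ℝ≥0∞)⁻¹ ≠ ⊤ :=
          ENNReal.mul_ne_top (ENNReal.natCast_ne_top _)
            (ENNReal.inv_ne_top.2 (Nat.cast_ne_zero.2
              (Subgroup.FiniteIndex.index_ne_zero (H := Δ n))))
        have h2 := ENNReal.toReal_mono hfin h1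
        rwa [ENNReal.toReal_mul, ENNReal.toReal_inv, ENNReal.toReal_natCast,
          ENNReal.toReal_natCast, ← div_eq_mul_inv] at h2
      have hle0 := ge_of_tendsto (hden h hh) (Filter.Eventually.of_forall hb)
      have h0 := le_antisymm hle0 ENNReal.toReal_nonneg
      exact ((ENNReal.toReal_eq_zero_iff _).1 h0).resolve_right
        (MeasureTheory.measure_ne_top μ _)
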